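/- Let H be 2-vertex-connected and let I_1,...,I_p (p ≥ 2) partition E_H into nonempty groups, with I'_i the vertex sets incident to I_i. If t vertices of H lie in at least two of the sets I'_i (boundary vertices), then each I'_i contains at least 2 boundary vertices. -/
import Mathlib


/-- A graph is 2-vertex-connected: it has at least 3 vertices and removing any
single vertex leaves it connected. -/
def TwoConnected {V : Type*} (G : SimpleGraph V) : Prop :=
  3 ≤ Nat.card V ∧ ∀ v : V, (G.induce ({v}ᶜ : Set V)).Connected

private lemma edge_two_mem {V : Type*} (G : SimpleGraph V) {e : Sym2 V}
    (he : e ∈ G.edgeSet) : ∃ x y, x ≠ y ∧ x ∈ e ∧ y ∈ e := by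
  induction e using Sym2.ind with
  | _ x y =>
    exact ⟨x, y, (G.mem_edgeSet.mp he).ne, Sym2.mem_mk_left _ _,
      Sym2.mem_mk_right _ _⟩

private lemma walk_boundary {V : Type*} (H : SimpleGraph V) {p : ℕ}
    (I : Fin p → Set (Sym2 V)) (hcover : (⋃ i, I i) = H.edgeSet) (i : Fin p) :
    ∀ {a c : V} (W : H.Walk a c), (∃ e ∈ I i, a ∈ e) →
      (∃ j : Fin p, j ≠ i ∧ ∃ e ∈ I j, c ∈ e) →
      ∃ w ∈ W.support, (∃ e ∈ I i, w ∈ e) ∧ ∃ j : Fin p, j ≠ i ∧ ∃ e ∈ I j, w ∈ e := by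
  intro a c W
  induction W with
  | nil => intro ha hc; exact ⟨_, SimpleGraph.Walk.start_mem_support _, ha, hc⟩
  | @cons a b c h W ih =>
    intro ha hc
    have hedge : s(a, b) ∈ ⋃ k, I k := by rw [hcover]; exact h
    obtain ⟨k, hk⟩ := Set.mem_iUnion.mp hedge
    by_cases hki : k = i
    · subst hki
      obtain ⟨w, hw, hwb⟩ := ih ⟨s(a, b), hk, Sym2.mem_mk_right _ _⟩ hc
      exact ⟨w, List.mem_cons_of_mem _ hw, hwb⟩
    · exact ⟨a, SimpleGraph.Walk.start_mem_support _,
        ha, k, hki, s(a, b), hk, Sym2.mem_mk_left _ _⟩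

theorem stmt_1 {V : Type*} [Fintype V] (H : SimpleGraph V) (hH : TwoConnected H)
    (p : ℕ) (hp : 2 ≤ p) (I : Fin p → Set (Sym2 V))
    (hsub : ∀ i, I i ⊆ H.edgeSet)
    (hne : ∀ i, (I i).Nonempty)
    (hdisj : ∀ i j, i ≠ j → Disjoint (I i) (I j))
    (hcover : (⋃ i, I i) = H.edgeSet)
    (t : ℕ)
    (ht : t = ({v : V | ∃ i j : Fin p, i ≠ j ∧ (∃ e ∈ I i, v ∈ e) ∧
      (∃ e ∈ I j, v ∈ e)}).ncard) :
    ∀ i : Fin p,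
      2 ≤ ({v : V | (∃ e ∈ I i, v ∈ e) ∧ ∃ j : Fin p, j ≠ i ∧ ∃ e ∈ I j, v ∈ e}).ncard := by
  intro i
  by_contra hlt
  push_neg at hlt
  set B : Set V := {v | (∃ e ∈ I i, v ∈ e) ∧ ∃ j : Fin p, j ≠ i ∧ ∃ e ∈ I j, v ∈ e}
    with hB
  have hVne : Nonempty V := by
    have h3 := hH.1
    rcases isEmpty_or_nonempty V with h | h
    · simp [Nat.card_of_isEmpty] at h3
    · exact h
  -- B is contained in a singleton
  obtain ⟨v, hBv⟩ : ∃ v : V, B ⊆ {v} := by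
    rcases Set.eq_empty_or_nonempty B with h | ⟨b, hb⟩
    · exact ⟨Classical.arbitrary V, by simp [h]⟩
    · refine ⟨b, fun x hx => ?_⟩
      by_contra hxb
      have : 1 < B.ncard := (Set.one_lt_ncard_iff (Set.toFinite B)).mpr ⟨x, b, hx, hb, hxb⟩
      omega
  -- pick a ∈ I'_i with a ≠ v
  obtain ⟨e₁, he₁⟩ := hne i
  obtain ⟨x, y, hxy, hxe, hye⟩ := edge_two_mem H (hsub i he₁)
  obtain ⟨a, hav, hae⟩ : ∃ a, a ≠ v ∧ a ∈ e₁ := by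
    by_cases hx : x = v
    · exact ⟨y, by rw [← hx]; exact hxy.symm, hye⟩
    · exact ⟨x, hx, hxe⟩
  -- pick j ≠ i and c ∈ I'_j with c ≠ v
  have : Nontrivial (Fin p) := Fin.nontrivial_iff_two_le.mpr hp
  obtain ⟨j, hji⟩ := exists_ne i
  obtain ⟨e₂, he₂⟩ := hne j
  obtain ⟨x', y', hxy', hxe', hye'⟩ := edge_two_mem H (hsub j he₂)
  obtain ⟨c, hcv, hce⟩ : ∃ c, c ≠ v ∧ c ∈ e₂ := by
    by_cases hx : x' = v
    · exact ⟨y', by rw [← hx]; exact hxy'.symm, hye'⟩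
    · exact ⟨x', hx, hxe'⟩
  -- walk from a to c in H avoiding v
  have hconn := hH.2 v
  have haM : a ∈ ({v}ᶜ : Set V) := by simpa using hav
  have hcM : c ∈ ({v}ᶜ : Set V) := by simpa using hcv
  obtain ⟨W₀⟩ := hconn ⟨a, haM⟩ ⟨c, hcM⟩
  let f : H.induce ({v}ᶜ : Set V) →g H := (SimpleGraph.Embedding.induce _).toHom
  let W : H.Walk a c := W₀.map f
  obtain ⟨w, hw, hwB⟩ := walk_boundary H I hcover i W ⟨e₁, he₁, hae⟩ ⟨j, hji, e₂, he₂, hce⟩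
  have hwv : w ≠ v := by
    have : w ∈ (W₀.map f).support := hw
    rw [SimpleGraph.Walk.support_map] at this
    obtain ⟨u, _, rfl⟩ := List.mem_map.mp this
    exact u.2
  exact hwv (hBv hwB)
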